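/- Let V be a finite set, b : V → ℝ with ∑_{v ∈ V} b(v) = 0 and ∑_{v ∈ V} max(b(v), 0) = 1, and r ∈ V. Let T ⊆ V with r ∈ T contain every vertex with b(v) > 0 and carry an in-tree parent function p_T rooted at r; let U ⊆ V with r ∈ U contain every vertex with b(v) < 0 and carry an out-tree parent function p_U rooted at r. Let v_1, …, v_n enumerate T∖{r} in leaf-to-root order, let D(v) = ∑_{w descendant of v in U} max(−b(w), 0) for v ∈ U and D(v) = 0 otherwise, let s_0(v) = max(b(v), 0), and for k = 1, …, n obtain s_k from s_{k−1} by transferring a(v_k) := min(s_{k−1}(v_k), 1 − D(v_k)) from v_k to p_T(v_k). Define f : V × V → ℝ by f(v, w) = [v ∈ T∖{r} and w = p_T(v)] · a(v) + [w ∈ U∖{r} and v = p_U(w)] · (D(w) − ∑_{u descendant of w in U} s_n(u)), with s_n extended by 0 outside T. Then f ≥ 0 and for every vertex v ∈ V, b(v) + ∑_{u ∈ V} f(u, v) − ∑_{w ∈ V} f(v, w) = 0; that is, the flow constructed by the modified Goldberg–Rao algorithm is nonnegative and has zero balance at every vertex. -/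

import Mathlib

set_option linter.unusedSectionVars false
set_option linter.unusedVariables false
set_option maxHeartbeats 1000000


/-- `u` is a descendant of `x` in the tree given by the parent function `p`
rooted at `r`: iterating `p` from `u` reaches `x` (without first leaving the
tree through the root `r`). Every vertex is a descendant of itself. -/
def IsDesc {V : Type*} (p : V → V) (r : V) (u x : V) : Prop :=
  ∃ k : ℕ, p^[k] u = x ∧ ∀ j < k, p^[j] u ≠ r

namespace Stmt6Aux

open Classical

noncomputable def dist {V : Type*} (p : V → V) (r u : V) : ℕ :=
  if h : ∃ k : ℕ, p^[k] u = r then Nat.find h else 0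

variable {V : Type*} [Fintype V] {p : V → V} {r : V} {U : Finset V}

lemma dist_spec {u : V} (h : ∃ k : ℕ, p^[k] u = r) :
    p^[dist p r u] u = r ∧ ∀ j < dist p r u, p^[j] u ≠ r := by
  rw [dist, dif_pos h]
  exact ⟨Nat.find_spec h, fun j hj => Nat.find_min h hj⟩

lemma dist_unique {u : V} {k : ℕ} (hk : p^[k] u = r) (hmin : ∀ j < k, p^[j] u ≠ r) :
    dist p r u = k := by
  have h : ∃ m : ℕ, p^[m] u = r := ⟨k, hk⟩
  rw [dist, dif_pos h]
  rcases lt_trichotomy (Nat.find h) k with h1 | h1 | h1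
  · exact absurd (Nat.find_spec h) (hmin _ h1)
  · exact h1
  · exact absurd hk (Nat.find_min h h1)

section Tree

variable (hrU : r ∈ U) (hpU : ∀ u ∈ U, u ≠ r → p u ∈ U)
  (hroot : ∀ u ∈ U, ∃ k : ℕ, p^[k] u = r)

include hroot

lemma dist_iter {u : V} (hu : u ∈ U) :
    p^[dist p r u] u = r ∧ ∀ j < dist p r u, p^[j] u ≠ r :=
  dist_spec (hroot u hu)

lemma dist_eq_zero_iff {u : V} (hu : u ∈ U) : dist p r u = 0 ↔ u = r := by
  constructor
  · intro h
    have := (dist_iter hroot hu).1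
    rwa [h, Function.iterate_zero_apply] at this
  · intro h
    exact dist_unique (by simp [h]) (by omega)

include hpU

lemma iter_mem {u : V} (hu : u ∈ U) :
    ∀ k : ℕ, (∀ j < k, p^[j] u ≠ r) → p^[k] u ∈ U := by
  intro k
  induction k with
  | zero => intro _; simpa using hu
  | succ m ih =>
    intro hav
    rw [Function.iterate_succ_apply']
    exact hpU _ (ih fun j hj => hav j (by omega)) (hav m (by omega))

lemma desc_iff {u x : V} (hu : u ∈ U) (hx : x ∈ U) :
    IsDesc p r u x ↔ dist p r x ≤ dist p r u ∧ p^[dist p r u - dist p r x] u = x := by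
  obtain ⟨hxr, hxmin⟩ := dist_iter hroot hx
  obtain ⟨hur, humin⟩ := dist_iter hroot hu
  constructor
  · rintro ⟨k, hk, hav⟩
    have hdu : dist p r u = dist p r x + k := by
      apply dist_unique
      · rw [Function.iterate_add_apply, hk]; exact hxr
      · intro j hj
        rcases Nat.lt_or_ge j k with h1 | h1
        · exact hav j h1
        · have : j - k < dist p r x := by omega
          have : p^[j] u = p^[j - k] x := by
            conv_lhs => rw [show j = (j - k) + k by omega, Function.iterate_add_apply, hk]
          rw [this]
          exact hxmin _ (by omega)
    constructor
    · omega
    · rw [hdu]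
      simpa using hk
  · rintro ⟨hle, heq⟩
    exact ⟨dist p r u - dist p r x, heq, fun j hj => humin j (by omega)⟩

lemma desc_trans {w u x : V} (hw : w ∈ U) (hu : u ∈ U) (hx : x ∈ U)
    (h1 : IsDesc p r w u) (h2 : IsDesc p r u x) : IsDesc p r w x := by
  rw [desc_iff hpU hroot hw hu] at h1
  rw [desc_iff hpU hroot hu hx] at h2
  rw [desc_iff hpU hroot hw hx]
  obtain ⟨h1le, h1e⟩ := h1
  obtain ⟨h2le, h2e⟩ := h2
  refine ⟨by omega, ?_⟩
  have : dist p r w - dist p r x = (dist p r u - dist p r x) + (dist p r w - dist p r u) := by omega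
  rw [this, Function.iterate_add_apply, h1e, h2e]

lemma child_dist {c x : V} (hc : c ∈ U) (hcr : c ≠ r) (hcx : p c = x) (hx : x ∈ U) :
    dist p r c = dist p r x + 1 := by
  obtain ⟨hxr, hxmin⟩ := dist_iter hroot hx
  apply dist_unique
  · rw [Function.iterate_succ_apply, hcx]; exact hxr
  · intro j hj
    match j with
    | 0 => simpa using hcr
    | Nat.succ l =>
      rw [Function.iterate_succ_apply, hcx]
      exact hxmin l (by omega)

lemma partition (x : V) (hx : x ∈ U) (F : V → ℝ) :
    ∑ w ∈ Finset.univ.filter (fun w => w ∈ U ∧ IsDesc p r w x), F w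
      = F x + ∑ c ∈ Finset.univ.filter (fun c => c ∈ U ∧ c ≠ r ∧ p c = x),
          ∑ w ∈ Finset.univ.filter (fun w => w ∈ U ∧ IsDesc p r w c), F w := by
  have hxmem : x ∈ Finset.univ.filter (fun w => w ∈ U ∧ IsDesc p r w x) := by
    simp only [Finset.mem_filter, Finset.mem_univ, true_and]
    exact ⟨hx, 0, by simp, by omega⟩
  have hdisj : ((Finset.univ.filter (fun c => c ∈ U ∧ c ≠ r ∧ p c = x) : Finset V) : Set V).PairwiseDisjoint
      (fun c => Finset.univ.filter (fun w => w ∈ U ∧ IsDesc p r w c)) := by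
    intro c hcm c' hcm' hne
    simp only [Finset.coe_filter, Set.mem_setOf_eq, Finset.mem_univ, true_and] at hcm hcm'
    obtain ⟨hc, hcr, hcx⟩ := hcm
    obtain ⟨hc', hcr', hcx'⟩ := hcm'
    rw [Function.onFun, Finset.disjoint_left]
    intro w hw hw'
    simp only [Finset.mem_filter, Finset.mem_univ, true_and] at hw hw'
    obtain ⟨hwU, hwd⟩ := hw
    obtain ⟨_, hwd'⟩ := hw'
    rw [desc_iff hpU hroot hwU hc] at hwd
    rw [desc_iff hpU hroot hwU hc'] at hwd'
    have e1 := child_dist hpU hroot hc hcr hcx hx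
    have e2 := child_dist hpU hroot hc' hcr' hcx' hx
    apply hne
    rw [← hwd.2, ← hwd'.2, e1, e2]
  have hbi : (Finset.univ.filter (fun c => c ∈ U ∧ c ≠ r ∧ p c = x)).biUnion
      (fun c => Finset.univ.filter (fun w => w ∈ U ∧ IsDesc p r w c))
      = (Finset.univ.filter (fun w => w ∈ U ∧ IsDesc p r w x)).erase x := by
    ext w
    simp only [Finset.mem_biUnion, Finset.mem_erase, Finset.mem_filter, Finset.mem_univ, true_and]
    constructor
    · rintro ⟨c, ⟨hc, hcr, hcx⟩, hwU, hwd⟩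
      have e1 : dist p r c = dist p r x + 1 := child_dist hpU hroot hc hcr hcx hx
      have hdx : IsDesc p r w x := by
        refine desc_trans hpU hroot hwU hc hx hwd ?_
        rw [desc_iff hpU hroot hc hx]
        refine ⟨by omega, ?_⟩
        rw [e1]
        simpa using hcx
      refine ⟨?_, hwU, hdx⟩
      rw [desc_iff hpU hroot hwU hc] at hwd
      obtain ⟨hwd1, hwd2⟩ := hwd
      intro hwx
      subst hwx
      omega
    · rintro ⟨hwx, hwU, hwd⟩
      rw [desc_iff hpU hroot hwU hx] at hwd
      obtain ⟨hle, heq⟩ := hwd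
      have hne : dist p r x ≠ dist p r w := by
        intro h
        apply hwx
        rw [← heq, h]
        simp
      obtain ⟨hwr, hwmin⟩ := dist_iter hroot hwU
      set k := dist p r w - dist p r x - 1 with hk
      have hkw : k < dist p r w := by omega
      refine ⟨p^[k] w, ⟨?_, ?_, ?_⟩, hwU, ?_⟩
      · exact iter_mem hpU hroot hwU k (fun j hj => hwmin j (by omega))
      · exact hwmin k hkw
      · rw [← Function.iterate_succ_apply' p k w, Nat.succ_eq_add_one,
            show k + 1 = dist p r w - dist p r x from by omega]
        exact heq
      · have hcU : p^[k] w ∈ U := iter_mem hpU hroot hwU k (fun j hj => hwmin j (by omega))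
        rw [desc_iff hpU hroot hwU hcU]
        have hcd : dist p r (p^[k] w) = dist p r x + 1 := by
          apply child_dist hpU hroot hcU (hwmin k hkw) ?_ hx
          rw [← Function.iterate_succ_apply' p k w, Nat.succ_eq_add_one,
            show k + 1 = dist p r w - dist p r x from by omega]
          exact heq
        rw [hcd]
        exact ⟨by omega, by rw [show dist p r w - (dist p r x + 1) = k by omega]⟩
  rw [← Finset.sum_biUnion hdisj, hbi, Finset.add_sum_erase _ _ hxmem]

lemma descSet_root : Finset.univ.filter (fun w => w ∈ U ∧ IsDesc p r w r) = U := by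
  ext w
  simp only [Finset.mem_filter, Finset.mem_univ, true_and]
  constructor
  · exact fun h => h.1
  · intro hw
    obtain ⟨hwr, hwmin⟩ := dist_iter hroot hw
    exact ⟨hw, dist p r w, hwr, hwmin⟩

lemma not_root_of_desc {w x : V} (hw : w ∈ U) (hx : x ∈ U) (hxr : x ≠ r)
    (h : IsDesc p r w x) : w ≠ r := by
  rw [desc_iff hpU hroot hw hx] at h
  intro hwr
  have h0 : dist p r w = 0 := (dist_eq_zero_iff hroot hw).2 hwr
  have hx0 : dist p r x ≠ 0 := fun hh => hxr ((dist_eq_zero_iff hroot hx).1 hh)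
  omega

end Tree
end Stmt6Aux


open Classical in
/-- The flow constructed by Steps 2′ and 3′ of the modified Goldberg–Rao
algorithm is nonnegative and has zero balance at every vertex. -/
theorem stmt_6 {V : Type*} [Fintype V]
    (b : V → ℝ) (r : V) (T U : Finset V) (pT pU : V → V)
    (n : ℕ) (v : Fin n → V) (D : V → ℝ) (s : ℕ → V → ℝ) (a : V → ℝ) (f : V × V → ℝ)
    (hbsum : ∑ u, b u = 0)
    (hsupply : ∑ u, max (b u) 0 = 1)
    (hrT : r ∈ T) (hrU : r ∈ U)
    (hTsupp : ∀ u, 0 < b u → u ∈ T)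
    (hUdem : ∀ u, b u < 0 → u ∈ U)
    (hpT : ∀ u ∈ T, u ≠ r → pT u ∈ T)
    (hpTroot : ∀ u ∈ T, ∃ k : ℕ, pT^[k] u = r)
    (hpU : ∀ u ∈ U, u ≠ r → pU u ∈ U)
    (hpUroot : ∀ u ∈ U, ∃ k : ℕ, pU^[k] u = r)
    (hD : ∀ u, D u = if u ∈ U then
      ∑ w ∈ Finset.univ.filter (fun w => w ∈ U ∧ IsDesc pU r w u), max (-b w) 0
      else 0)
    (hvinj : Function.Injective v)
    (hvmem : ∀ i, v i ∈ T ∧ v i ≠ r)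
    (hvsurj : ∀ u ∈ T, u ≠ r → ∃ i, v i = u)
    (horder : ∀ i j : Fin n, pT (v i) = v j → i < j)
    (hs0 : ∀ u, s 0 u = max (b u) 0)
    (hstep : ∀ i : Fin n,
      s ((i : ℕ) + 1) (v i) = s i (v i) - min (s i (v i)) (1 - D (v i)) ∧
      s ((i : ℕ) + 1) (pT (v i)) = s i (pT (v i)) + min (s i (v i)) (1 - D (v i)) ∧
      ∀ u, u ≠ v i → u ≠ pT (v i) → s ((i : ℕ) + 1) u = s i u)
    (ha : ∀ i : Fin n, a (v i) = min (s i (v i)) (1 - D (v i)))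
    (hf : ∀ x y : V, f (x, y) =
      (if x ∈ T ∧ x ≠ r ∧ y = pT x then a x else 0) +
      (if y ∈ U ∧ y ≠ r ∧ x = pU y then
        D y - ∑ u ∈ Finset.univ.filter (fun u => u ∈ U ∧ IsDesc pU r u y),
          (if u ∈ T then s n u else 0)
       else 0)) :
    (∀ x y : V, 0 ≤ f (x, y)) ∧
    (∀ x : V, b x + (∑ u, f (u, x)) - (∑ w, f (x, w)) = 0) := by
  classical
  -- ===== basic scalar facts =====
  have hmaxid : ∀ t : ℝ, t - max t 0 + max (-t) 0 = 0 := by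
    intro t
    rcases le_total t 0 with h | h
    · rw [max_eq_right h, max_eq_left (by linarith)]; ring
    · rw [max_eq_left h, max_eq_right (by linarith)]; ring
  have hdem : ∑ u, max (-b u) 0 = 1 := by
    have h1 : ∀ u : V, max (-b u) 0 = max (b u) 0 - b u := by
      intro u; have := hmaxid (b u); linarith
    rw [Finset.sum_congr rfl fun u _ => h1 u, Finset.sum_sub_distrib, hsupply, hbsum]
    ring
  have hD0 : ∀ u, 0 ≤ D u := by
    intro u; rw [hD u]
    split
    · exact Finset.sum_nonneg fun w _ => le_max_right _ _
    · exact le_refl 0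
  have hD1 : ∀ u, D u ≤ 1 := by
    intro u; rw [hD u]
    split
    · exact le_trans
        (Finset.sum_le_sum_of_subset_of_nonneg (Finset.subset_univ _)
          (fun w _ _ => le_max_right _ _)) (le_of_eq hdem)
    · linarith
  have hvne : ∀ i : Fin n, v i ≠ pT (v i) := by
    intro i h
    exact absurd (horder i i h.symm) (lt_irrefl i)
  -- ===== pointwise step formula =====
  have hsform : ∀ (i : Fin n) (u : V), s ((i : ℕ) + 1) u
      = s i u + (if u = pT (v i) then a (v i) else 0) - (if u = v i then a (v i) else 0) := by
    intro i u
    obtain ⟨h1, h2, h3⟩ := hstep i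
    by_cases hu1 : u = v i
    · rw [hu1, if_neg (hvne i), if_pos rfl, h1, ha i]; ring
    · by_cases hu2 : u = pT (v i)
      · rw [hu2, if_pos rfl, if_neg (fun h => hvne i h.symm), h2, ha i]; ring
      · rw [h3 u hu1 hu2, if_neg hu2, if_neg hu1]; ring
  -- ===== nonnegativity of s =====
  have hsnonneg : ∀ k, k ≤ n → ∀ u, 0 ≤ s k u := by
    intro k
    induction k with
    | zero => intro _ u; rw [hs0]; exact le_max_right _ _
    | succ m ih =>
      intro hm u
      have hmn : m < n := by omega
      have hform : s (m + 1) u = s m u + (if u = pT (v ⟨m, hmn⟩) then a (v ⟨m, hmn⟩) else 0)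
          - (if u = v ⟨m, hmn⟩ then a (v ⟨m, hmn⟩) else 0) := hsform ⟨m, hmn⟩ u
      have haa : a (v ⟨m, hmn⟩) = min (s m (v ⟨m, hmn⟩)) (1 - D (v ⟨m, hmn⟩)) := ha ⟨m, hmn⟩
      have hanon : 0 ≤ a (v ⟨m, hmn⟩) := by
        rw [haa]
        exact le_min (ih (by omega) _) (by linarith [hD1 (v ⟨m, hmn⟩)])
      rw [hform]
      by_cases hu1 : u = v ⟨m, hmn⟩
      · rw [hu1, if_neg (hvne _), if_pos rfl, haa]
        have h5 := min_le_left (s m (v ⟨m, hmn⟩)) (1 - D (v ⟨m, hmn⟩))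
        have h6 := ih (by omega) (v ⟨m, hmn⟩)
        linarith
      · by_cases hu2 : u = pT (v ⟨m, hmn⟩)
        · rw [if_pos hu2, if_neg hu1]
          have h6 := ih (by omega) u
          linarith
        · rw [if_neg hu2, if_neg hu1]
          have h6 := ih (by omega) u
          linarith
  have ham : ∀ i : Fin n, 0 ≤ a (v i) := by
    intro i
    rw [ha i]
    exact le_min (hsnonneg (i : ℕ) (le_of_lt i.isLt) _) (by linarith [hD1 (v i)])
  -- ===== conservation =====
  have hconserve : ∀ k, k ≤ n → ∑ u, s k u = 1 := by
    intro k
    induction k with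
    | zero => intro _; rw [Finset.sum_congr rfl fun u _ => hs0 u]; exact hsupply
    | succ m ih =>
      intro hm
      have hmn : m < n := by omega
      have hform : ∀ u, s (m + 1) u = s m u + (if u = pT (v ⟨m, hmn⟩) then a (v ⟨m, hmn⟩) else 0)
          - (if u = v ⟨m, hmn⟩ then a (v ⟨m, hmn⟩) else 0) := fun u => hsform ⟨m, hmn⟩ u
      rw [Finset.sum_congr rfl fun u _ => hform u, Finset.sum_sub_distrib,
        Finset.sum_add_distrib,
        Finset.sum_ite_eq' Finset.univ (pT (v ⟨m, hmn⟩)) (fun _ => a (v ⟨m, hmn⟩)),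
        Finset.sum_ite_eq' Finset.univ (v ⟨m, hmn⟩) (fun _ => a (v ⟨m, hmn⟩)),
        if_pos (Finset.mem_univ _), if_pos (Finset.mem_univ _), ih (by omega)]
      ring
  have hsle1 : ∀ k, k ≤ n → ∀ u, s k u ≤ 1 := by
    intro k hk u
    have h1 := Finset.single_le_sum (f := s k) (fun w _ => hsnonneg k hk w) (Finset.mem_univ u)
    rwa [hconserve k hk] at h1
  -- ===== cumulative formula =====
  have hscum : ∀ k, k ≤ n → ∀ u, s k u = max (b u) 0
      + (∑ i ∈ Finset.univ.filter (fun i : Fin n => (i : ℕ) < k), if u = pT (v i) then a (v i) else 0)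
      - (∑ i ∈ Finset.univ.filter (fun i : Fin n => (i : ℕ) < k), if u = v i then a (v i) else 0) := by
    intro k
    induction k with
    | zero =>
      intro _ u
      rw [hs0]
      simp
    | succ m ih =>
      intro hm u
      have hmn : m < n := by omega
      have hform : s (m + 1) u = s m u + (if u = pT (v ⟨m, hmn⟩) then a (v ⟨m, hmn⟩) else 0)
          - (if u = v ⟨m, hmn⟩ then a (v ⟨m, hmn⟩) else 0) := hsform ⟨m, hmn⟩ u
      have hfil : Finset.univ.filter (fun i : Fin n => (i : ℕ) < m + 1)
          = insert (⟨m, hmn⟩ : Fin n) (Finset.univ.filter (fun i : Fin n => (i : ℕ) < m)) := by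
        ext j
        simp only [Finset.mem_filter, Finset.mem_univ, true_and, Finset.mem_insert, Fin.ext_iff]
        omega
      have hnotmem : (⟨m, hmn⟩ : Fin n) ∉ Finset.univ.filter (fun i : Fin n => (i : ℕ) < m) := by
        simp
      rw [hform, ih (by omega), hfil, Finset.sum_insert hnotmem, Finset.sum_insert hnotmem]
      ring
  -- ===== stability after processing =====
  have hstab : ∀ (i : Fin n) (k : ℕ), (i : ℕ) + 1 ≤ k → k ≤ n → s k (v i) = s ((i : ℕ) + 1) (v i) := by
    intro i k
    induction k with
    | zero => intro h1 _; omega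
    | succ m ih =>
      intro h1 h2
      by_cases hc : (i : ℕ) + 1 = m + 1
      · rw [hc]
      · have hi : (i : ℕ) + 1 ≤ m := by omega
        have hmn : m < n := by omega
        have hform : s (m + 1) (v i) = s m (v i)
            + (if v i = pT (v ⟨m, hmn⟩) then a (v ⟨m, hmn⟩) else 0)
            - (if v i = v ⟨m, hmn⟩ then a (v ⟨m, hmn⟩) else 0) := hsform ⟨m, hmn⟩ (v i)
        have hne1 : v i ≠ pT (v ⟨m, hmn⟩) := by
          intro h
          have h3 : (⟨m, hmn⟩ : Fin n) < i := horder ⟨m, hmn⟩ i h.symm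
          have h4 : m < (i : ℕ) := h3
          omega
        have hne2 : v i ≠ v ⟨m, hmn⟩ := by
          intro h
          have h3 : i = ⟨m, hmn⟩ := hvinj h
          have h4 : (i : ℕ) = m := congrArg Fin.val h3
          omega
        rw [hform, if_neg hne1, if_neg hne2, ih hi (by omega)]
        ring
  -- ===== final value at processed vertices =====
  have hsubmin : ∀ x y : ℝ, x - min x y = max (x - y) 0 := by
    intro x y
    rcases le_total x y with h | h
    · rw [min_eq_left h, max_eq_right (by linarith)]; ring
    · rw [min_eq_right h, max_eq_left (by linarith)]
  have hsnT : ∀ i : Fin n, s n (v i) = max (s i (v i) - (1 - D (v i))) 0 := by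
    intro i
    have h1 : s n (v i) = s ((i : ℕ) + 1) (v i) := hstab i n i.isLt le_rfl
    obtain ⟨h2, -, -⟩ := hstep i
    rw [h1, h2, hsubmin]
  have hsnz_notU : ∀ i : Fin n, v i ∉ U → s n (v i) = 0 := by
    intro i hiU
    have hDz : D (v i) = 0 := by rw [hD (v i), if_neg hiU]
    rw [hsnT i, hDz]
    have h1 := hsle1 (i : ℕ) (le_of_lt i.isLt) (v i)
    rw [max_eq_right (by linarith)]
  have hsn_notT : ∀ u, u ∉ T → s n u = 0 := by
    intro u hu
    have hb : max (b u) 0 = 0 := max_eq_right (le_of_not_gt fun h => hu (hTsupp u h))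
    rw [hscum n le_rfl u, hb,
      Finset.sum_eq_zero (fun (i : Fin n) _ =>
        if_neg (fun h => hu (by rw [h]; exact hpT (v i) (hvmem i).1 (hvmem i).2))),
      Finset.sum_eq_zero (fun (i : Fin n) _ =>
        if_neg (fun h => hu (by rw [h]; exact (hvmem i).1)))]
    ring
  -- ===== T-side sums =====
  have himg : Finset.univ.filter (fun u : V => u ∈ T ∧ u ≠ r) = Finset.image v Finset.univ := by
    ext u
    simp only [Finset.mem_filter, Finset.mem_univ, true_and, Finset.mem_image]
    constructor
    · rintro ⟨h1, h2⟩
      obtain ⟨i, hi⟩ := hvsurj u h1 h2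
      exact ⟨i, hi⟩
    · rintro ⟨i, rfl⟩
      exact ⟨(hvmem i).1, (hvmem i).2⟩
  have hTin : ∀ x : V, (∑ u : V, if u ∈ T ∧ u ≠ r ∧ x = pT u then a u else 0)
      = ∑ i : Fin n, (if x = pT (v i) then a (v i) else 0) := by
    intro x
    have h1 : ∀ u : V, (if u ∈ T ∧ u ≠ r ∧ x = pT u then a u else 0)
        = (if u ∈ T ∧ u ≠ r then (if x = pT u then a u else 0) else 0) := by
      intro u
      by_cases h2 : u ∈ T ∧ u ≠ r
      · by_cases h3 : x = pT u
        · rw [if_pos ⟨h2.1, h2.2, h3⟩, if_pos h2, if_pos h3]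
        · rw [if_neg (fun h => h3 h.2.2), if_pos h2, if_neg h3]
      · rw [if_neg (fun h => h2 ⟨h.1, h.2.1⟩), if_neg h2]
    rw [Finset.sum_congr rfl fun u _ => h1 u, ← Finset.sum_filter, himg,
      Finset.sum_image (fun i _ j _ h => hvinj h)]
  have hAsum : ∀ x : V, (∑ i : Fin n, if x = v i then a (v i) else 0)
      = (if x ∈ T ∧ x ≠ r then a x else 0) := by
    intro x
    by_cases hx : x ∈ T ∧ x ≠ r
    · obtain ⟨i0, hi0⟩ := hvsurj x hx.1 hx.2
      rw [if_pos hx, Finset.sum_eq_single i0]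
      · rw [if_pos hi0.symm, hi0]
      · intro j _ hj
        exact if_neg fun h => hj (hvinj (hi0.trans h)).symm
      · intro h; exact absurd (Finset.mem_univ i0) h
    · rw [if_neg hx, Finset.sum_eq_zero]
      intro i _
      exact if_neg fun h => hx (by rw [h]; exact ⟨(hvmem i).1, (hvmem i).2⟩)
  have hfiln : Finset.univ.filter (fun i : Fin n => (i : ℕ) < n) = Finset.univ := by
    apply Finset.filter_true_of_mem
    intro i _
    exact i.isLt
  have hsnx : ∀ x : V, s n x = max (b x) 0
      + (∑ i : Fin n, if x = pT (v i) then a (v i) else 0)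
      - (if x ∈ T ∧ x ≠ r then a x else 0) := by
    intro x
    rw [hscum n le_rfl x, hfiln, hAsum]
  -- ===== U-side sums =====
  have hDsum : ∀ y, y ∈ U →
      D y = ∑ w ∈ Finset.univ.filter (fun w => w ∈ U ∧ IsDesc pU r w y), max (-b w) 0 :=
    fun y hy => by rw [hD y, if_pos hy]
  have hgx : ∀ y, y ∈ U →
      D y - (∑ u ∈ Finset.univ.filter (fun u => u ∈ U ∧ IsDesc pU r u y), if u ∈ T then s n u else 0)
      = (max (-b y) 0 - (if y ∈ T then s n y else 0))
        + ∑ c ∈ Finset.univ.filter (fun c => c ∈ U ∧ c ≠ r ∧ pU c = y),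
            (D c - ∑ u ∈ Finset.univ.filter (fun u => u ∈ U ∧ IsDesc pU r u c),
              if u ∈ T then s n u else 0) := by
    intro y hy
    rw [hDsum y hy, ← Finset.sum_sub_distrib,
      Stmt6Aux.partition hpU hpUroot y hy (fun w => max (-b w) 0 - (if w ∈ T then s n w else 0))]
    congr 1
    apply Finset.sum_congr rfl
    intro c hc
    simp only [Finset.mem_filter, Finset.mem_univ, true_and] at hc
    rw [hDsum c hc.1, ← Finset.sum_sub_distrib]
  -- ===== key nonnegativity bound =====
  have hg0 : ∀ y, y ∈ U → y ≠ r →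
      (∑ u ∈ Finset.univ.filter (fun u => u ∈ U ∧ IsDesc pU r u y), if u ∈ T then s n u else 0)
        ≤ D y := by
    intro y hy hyr
    set S := Finset.univ.filter
      (fun i : Fin n => (v i ∈ U ∧ IsDesc pU r (v i) y) ∧ s n (v i) ≠ 0) with hS
    by_cases hSE : S = ∅
    · have hz : ∀ u ∈ Finset.univ.filter (fun u => u ∈ U ∧ IsDesc pU r u y),
          (if u ∈ T then s n u else 0) = 0 := by
        intro u hu
        simp only [Finset.mem_filter, Finset.mem_univ, true_and] at hu
        by_cases huT : u ∈ T
        · rw [if_pos huT]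
          by_contra hzz
          have hur : u ≠ r := Stmt6Aux.not_root_of_desc hpU hpUroot hu.1 hy hyr hu.2
          obtain ⟨i, hi⟩ := hvsurj u huT hur
          have hiS : i ∈ S := by
            rw [hS]
            simp only [Finset.mem_filter, Finset.mem_univ, true_and]
            rw [hi]
            exact ⟨⟨hu.1, hu.2⟩, hzz⟩
          exact absurd (hSE ▸ hiS) (Finset.notMem_empty i)
        · rw [if_neg huT]
      rw [Finset.sum_eq_zero hz]
      exact hD0 y
    · have hSne : S.Nonempty := Finset.nonempty_of_ne_empty hSE
      set i0 := S.max' hSne with hi0def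
      have hi0S : i0 ∈ S := S.max'_mem hSne
      have hi0max : ∀ i ∈ S, i ≤ i0 := fun i hi => S.le_max' i hi
      rw [hS] at hi0S
      simp only [Finset.mem_filter, Finset.mem_univ, true_and] at hi0S
      obtain ⟨⟨hUi0, hdi0⟩, hz0⟩ := hi0S
      set C := Finset.image v (insert i0 (Finset.univ.filter (fun j : Fin n => j < i0))) with hC
      have hCval : ∀ t : ℕ, ∑ u ∈ C, s t u
          = s t (v i0) + ∑ j ∈ Finset.univ.filter (fun j : Fin n => j < i0), s t (v j) := by
        intro t
        rw [hC, Finset.sum_image (fun i _ j _ h => hvinj h), Finset.sum_insert (by simp)]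
      have hstep1 : (∑ u ∈ Finset.univ.filter (fun u => u ∈ U ∧ IsDesc pU r u y),
          if u ∈ T then s n u else 0) ≤ ∑ u ∈ C, s n u := by
        rw [← Finset.sum_filter (fun u : V => u ∈ T) (s n)]
        have hzz : ∀ u ∈ (Finset.univ.filter
            (fun u => u ∈ U ∧ IsDesc pU r u y)).filter (fun u : V => u ∈ T),
            u ∉ (Finset.univ.filter (fun u => u ∈ U ∧ IsDesc pU r u y)).filter
              (fun u : V => u ∈ T) ∩ C → s n u = 0 := by
          intro u hu hunotin
          have huC : u ∉ C := fun hCC => hunotin (Finset.mem_inter.2 ⟨hu, hCC⟩)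
          simp only [Finset.mem_filter, Finset.mem_univ, true_and] at hu
          obtain ⟨⟨huU, hud⟩, huT⟩ := hu
          by_contra hzz
          have hur : u ≠ r := Stmt6Aux.not_root_of_desc hpU hpUroot huU hy hyr hud
          obtain ⟨i, hi⟩ := hvsurj u huT hur
          apply huC
          rw [hC, Finset.mem_image]
          refine ⟨i, ?_, hi⟩
          have hiS : i ∈ S := by
            rw [hS]
            simp only [Finset.mem_filter, Finset.mem_univ, true_and]
            rw [hi]
            exact ⟨⟨huU, hud⟩, hzz⟩
          have hle := hi0max i hiS
          simp only [Finset.mem_insert, Finset.mem_filter, Finset.mem_univ, true_and]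
          rcases eq_or_lt_of_le hle with h | h
          · exact Or.inl h
          · exact Or.inr h
        calc ∑ u ∈ (Finset.univ.filter
              (fun u => u ∈ U ∧ IsDesc pU r u y)).filter (fun u : V => u ∈ T), s n u
            = ∑ u ∈ (Finset.univ.filter
              (fun u => u ∈ U ∧ IsDesc pU r u y)).filter (fun u : V => u ∈ T) ∩ C, s n u :=
              (Finset.sum_subset Finset.inter_subset_left
                (fun u hu hun => hzz u hu (fun hin => hun hin))).symm
          _ ≤ ∑ u ∈ C, s n u :=
              Finset.sum_le_sum_of_subset_of_nonneg Finset.inter_subset_right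
                (fun u _ _ => hsnonneg n le_rfl u)
      have h3 : ∀ j ∈ Finset.univ.filter (fun j : Fin n => j < i0),
          s n (v j) = s (i0 : ℕ) (v j) := by
        intro j hj
        have hjlt : j < i0 := (Finset.mem_filter.1 hj).2
        have e1 : s n (v j) = s ((j : ℕ) + 1) (v j) := hstab j n j.isLt le_rfl
        have e2 : s (i0 : ℕ) (v j) = s ((j : ℕ) + 1) (v j) :=
          hstab j (i0 : ℕ) hjlt (le_of_lt i0.isLt)
        rw [e1, e2]
      have h4 : s n (v i0) = s (i0 : ℕ) (v i0) - (1 - D (v i0)) := by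
        have h5 := hsnT i0
        rcases le_or_gt (s (i0 : ℕ) (v i0) - (1 - D (v i0))) 0 with hle | hlt
        · exact absurd (by rw [h5, max_eq_right hle]) hz0
        · rw [h5, max_eq_left (le_of_lt hlt)]
      have h6 : ∑ u ∈ C, s (i0 : ℕ) u ≤ 1 := by
        rw [← hconserve (i0 : ℕ) (le_of_lt i0.isLt)]
        exact Finset.sum_le_sum_of_subset_of_nonneg (Finset.subset_univ C)
          (fun u _ _ => hsnonneg _ (le_of_lt i0.isLt) u)
      have h7 : D (v i0) ≤ D y := by
        rw [hDsum _ hUi0, hDsum y hy]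
        apply Finset.sum_le_sum_of_subset_of_nonneg
        · intro w hw
          simp only [Finset.mem_filter, Finset.mem_univ, true_and] at hw ⊢
          exact ⟨hw.1, Stmt6Aux.desc_trans hpU hpUroot hw.1 hUi0 hy hw.2 hdi0⟩
        · intro w _ _; exact le_max_right _ _
      have h8 : ∑ u ∈ C, s n u ≤ D (v i0) := by
        rw [hCval n, Finset.sum_congr rfl h3, h4]
        have h9 := hCval (i0 : ℕ)
        linarith [h6]
      exact le_trans (le_trans hstep1 h8) h7
  -- ===== collapsing point sums =====
  have hcollapse2 : ∀ (A B : Prop) (c : V) (E : ℝ)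
      (inst : ∀ u : V, Decidable (A ∧ B ∧ u = c)) (inst2 : Decidable (A ∧ B)),
      (∑ u : V, @ite _ (A ∧ B ∧ u = c) (inst u) E 0) = @ite _ (A ∧ B) inst2 E 0 := by
    intro A B c E inst inst2
    by_cases hAB : A ∧ B
    · rw [if_pos hAB, Finset.sum_eq_single c]
      · rw [if_pos ⟨hAB.1, hAB.2, rfl⟩]
      · intro u _ hu; exact if_neg (fun h => hu h.2.2)
      · intro h; exact absurd (Finset.mem_univ _) h
    · rw [if_neg hAB, Finset.sum_eq_zero]
      intro u _
      exact if_neg fun h => hAB ⟨h.1, h.2.1⟩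
  have hsum_in : ∀ x : V, (∑ u : V, f (u, x))
      = (∑ i : Fin n, if x = pT (v i) then a (v i) else 0)
      + (if x ∈ U ∧ x ≠ r then
          D x - ∑ u ∈ Finset.univ.filter (fun u => u ∈ U ∧ IsDesc pU r u x),
            (if u ∈ T then s n u else 0)
        else 0) := by
    intro x
    rw [Finset.sum_congr rfl fun u _ => hf u x, Finset.sum_add_distrib, hTin x,
      hcollapse2 (x ∈ U) (x ≠ r) (pU x) _ _ _]
  have hsum_out : ∀ x : V, (∑ w : V, f (x, w))
      = (if x ∈ T ∧ x ≠ r then a x else 0)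
      + ∑ c ∈ Finset.univ.filter (fun c => c ∈ U ∧ c ≠ r ∧ pU c = x),
          (D c - ∑ u ∈ Finset.univ.filter (fun u => u ∈ U ∧ IsDesc pU r u c),
            (if u ∈ T then s n u else 0)) := by
    intro x
    rw [Finset.sum_congr rfl fun w _ => hf x w, Finset.sum_add_distrib,
      hcollapse2 (x ∈ T) (x ≠ r) (pT x) (a x) _ _]
    congr 1
    rw [← Finset.sum_filter]
    apply Finset.sum_congr
    · ext w
      simp only [Finset.mem_filter, Finset.mem_univ, true_and]
      constructor
      · rintro ⟨h1, h2, h3⟩; exact ⟨h1, h2, h3.symm⟩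
      · rintro ⟨h1, h2, h3⟩; exact ⟨h1, h2, h3.symm⟩
    · intro c _; rfl
  constructor
  · -- nonnegativity
    intro x y
    rw [hf x y]
    apply add_nonneg
    · by_cases h : x ∈ T ∧ x ≠ r ∧ y = pT x
      · rw [if_pos h]
        obtain ⟨i, hi⟩ := hvsurj x h.1 h.2.1
        rw [← hi]; exact ham i
      · rw [if_neg h]
    · by_cases h : y ∈ U ∧ y ≠ r ∧ x = pU y
      · rw [if_pos h]
        exact sub_nonneg.2 (hg0 y h.1 h.2.1)
      · rw [if_neg h]
  · -- balance
    intro x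
    rw [hsum_in x, hsum_out x]
    have hInT : (∑ i : Fin n, if x = pT (v i) then a (v i) else 0)
        = s n x - max (b x) 0 + (if x ∈ T ∧ x ≠ r then a x else 0) := by
      rw [hsnx x]; ring
    rw [hInT]
    by_cases hxU : x ∈ U
    · by_cases hxr : x = r
      · rw [hxr, if_neg (show ¬(r ∈ U ∧ r ≠ r) from fun h => h.2 rfl)]
        have hpart := Stmt6Aux.partition hpU hpUroot r hrU
          (fun w => max (-b w) 0 - (if w ∈ T then s n w else 0))
        rw [Stmt6Aux.descSet_root hpU hpUroot] at hpart
        have hUG : ∑ w ∈ U, (max (-b w) 0 - (if w ∈ T then s n w else 0)) = 0 := by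
          rw [Finset.sum_sub_distrib]
          have e1 : ∑ w ∈ U, max (-b w) 0 = 1 := by
            rw [← hdem]
            apply Finset.sum_subset (Finset.subset_univ U)
            intro w _ hw
            have hbw : ¬ b w < 0 := fun h => hw (hUdem w h)
            rw [max_eq_right (by linarith)]
          have e2 : ∑ w ∈ U, (if w ∈ T then s n w else 0) = 1 := by
            have e3 : ∀ w ∈ U, (if w ∈ T then s n w else 0) = s n w := by
              intro w _
              by_cases hwT : w ∈ T
              · rw [if_pos hwT]
              · rw [if_neg hwT, hsn_notT w hwT]
            rw [Finset.sum_congr rfl e3, ← hconserve n le_rfl]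
            apply Finset.sum_subset (Finset.subset_univ U)
            intro w _ hw
            by_cases hwT : w ∈ T
            · have hwr : w ≠ r := fun h => hw (h ▸ hrU)
              obtain ⟨i, hi⟩ := hvsurj w hwT hwr
              rw [← hi]
              exact hsnz_notU i (fun hmem => hw (hi ▸ hmem))
            · exact hsn_notT w hwT
          rw [e1, e2]; ring
        have hcs : ∑ c ∈ Finset.univ.filter (fun c => c ∈ U ∧ c ≠ r ∧ pU c = r),
            (D c - ∑ u ∈ Finset.univ.filter (fun u => u ∈ U ∧ IsDesc pU r u c),
              (if u ∈ T then s n u else 0))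
            = (if r ∈ T then s n r else 0) - max (-b r) 0 := by
          have e4 : ∀ c ∈ Finset.univ.filter (fun c => c ∈ U ∧ c ≠ r ∧ pU c = r),
              (D c - ∑ u ∈ Finset.univ.filter (fun u => u ∈ U ∧ IsDesc pU r u c),
                (if u ∈ T then s n u else 0))
              = ∑ w ∈ Finset.univ.filter (fun w => w ∈ U ∧ IsDesc pU r w c),
                  (max (-b w) 0 - (if w ∈ T then s n w else 0)) := by
            intro c hc
            simp only [Finset.mem_filter, Finset.mem_univ, true_and] at hc
            rw [hDsum c hc.1, ← Finset.sum_sub_distrib]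
          rw [Finset.sum_congr rfl e4]
          linarith [hpart, hUG]
        rw [hcs, if_pos hrT]
        linarith [hmaxid (b r)]
      · rw [if_pos (show x ∈ U ∧ x ≠ r from ⟨hxU, hxr⟩)]
        have hrec := hgx x hxU
        by_cases hxT : x ∈ T
        · rw [if_pos hxT] at hrec
          linarith [hmaxid (b x), hrec]
        · rw [if_neg hxT] at hrec
          have hbx : ¬ 0 < b x := fun h => hxT (hTsupp x h)
          have m1 : max (b x) 0 = 0 := max_eq_right (le_of_not_gt hbx)
          have m2 : max (-b x) 0 = -b x := max_eq_left (by linarith [le_of_not_gt hbx])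
          linarith [hrec, hsn_notT x hxT, m1, m2]
    · rw [if_neg (show ¬(x ∈ U ∧ x ≠ r) from fun h => hxU h.1)]
      have hchild : Finset.univ.filter (fun c => c ∈ U ∧ c ≠ r ∧ pU c = x) = ∅ := by
        ext c
        simp only [Finset.mem_filter, Finset.mem_univ, true_and, Finset.notMem_empty, iff_false]
        rintro ⟨h1, h2, h3⟩
        exact hxU (h3 ▸ hpU c h1 h2)
      rw [hchild, Finset.sum_empty]
      have hbx : ¬ b x < 0 := fun h => hxU (hUdem x h)
      have m1 : max (b x) 0 = b x := max_eq_left (by linarith)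
      have hsz : s n x = 0 := by
        by_cases hxT : x ∈ T
        · have hxr : x ≠ r := fun h => hxU (h ▸ hrU)
          obtain ⟨i, hi⟩ := hvsurj x hxT hxr
          rw [← hi]
          exact hsnz_notU i (fun hmem => hxU (hi ▸ hmem))
        · exact hsn_notT x hxT
      linarith [m1, hsz]
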